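/- Let (X,d) be a non-separable metric space in which every closed proper ball is totally bounded. Then (ω₁ + 1)^{ω} embeds topologically into (CL(X), τ_{w(d)}). -/

import Mathlib

/-- The hyperspace of nonempty closed subsets of `X`. -/
def CL (X : Type*) [TopologicalSpace X] : Type _ := {A : Set X // A.Nonempty ∧ IsClosed A}

/-- The Wijsman topology on `CL X`: the weakest topology making `A ↦ d(x, A)`
continuous for every `x : X`. -/
noncomputable def WijsmanTopology (X : Type*) [MetricSpace X] : TopologicalSpace (CL X) :=
  ⨅ x : X, TopologicalSpace.induced (fun A : CL X => Metric.infDist x A.1) inferInstance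

section AuxLemmas

open Metric Set TopologicalSpace

variable {X : Type*} [MetricSpace X]

/-- A uniformly separated set is closed. -/
lemma aux_sep_closed {ε : ℝ} (hε : 0 < ε) {S : Set X}
    (hsep : ∀ a ∈ S, ∀ b ∈ S, a ≠ b → ε ≤ dist a b) : IsClosed S := by
  apply isClosed_of_closure_subset
  intro y hy
  rw [Metric.mem_closure_iff] at hy
  obtain ⟨a, haS, hya⟩ := hy (ε / 2) (by linarith)
  rcases eq_or_ne y a with rfl | hne
  · exact haS
  · exfalso
    have hpos : 0 < dist y a := dist_pos.mpr hne
    obtain ⟨b, hbS, hyb⟩ := hy (min (dist y a) (ε / 2)) (by positivity)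
    have hyb1 : dist y b < dist y a := lt_of_lt_of_le hyb (min_le_left _ _)
    have hyb2 : dist y b < ε / 2 := lt_of_lt_of_le hyb (min_le_right _ _)
    have hba : b ≠ a := fun h => by simp [h] at hyb1
    have htri : dist a b ≤ dist a y + dist y b := dist_triangle _ _ _
    rw [dist_comm a y] at htri
    linarith [hsep a haS b hbS (Ne.symm hba)]

/-- In a non-separable metric space, there is an uncountable uniformly separated set. -/
lemma aux_exists_unc_sep (hsep : ¬ TopologicalSpace.SeparableSpace X) :
    ∃ ε > (0:ℝ), ∃ S : Set X, ¬ S.Countable ∧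
      ∀ a ∈ S, ∀ b ∈ S, a ≠ b → ε ≤ dist a b := by
  by_contra hc
  push_neg at hc
  apply hsep
  have hmax : ∀ n : ℕ, ∃ M : Set X,
      Maximal (fun S : Set X => ∀ a ∈ S, ∀ b ∈ S, a ≠ b → 1/((n:ℝ)+1) ≤ dist a b) M := by
    intro n
    apply zorn_subset
    intro c hcsub hchain
    refine ⟨⋃₀ c, ?_, fun s hs => subset_sUnion_of_mem hs⟩
    rintro a ⟨s, hsc, has⟩ b ⟨t, htc, hbt⟩ hab
    rcases hchain.total hsc htc with h | h
    · exact hcsub htc a (h has) b hbt hab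
    · exact hcsub hsc a has b (h hbt) hab
  choose M hM using hmax
  have hMc : ∀ n, (M n).Countable := by
    intro n
    by_contra hunc
    obtain ⟨a, haM, b, hbM, hab, hd⟩ :=
      hc (1/((n:ℝ)+1)) (by positivity) (M n) hunc
    exact absurd ((hM n).1 a haM b hbM hab) (not_le.mpr hd)
  refine ⟨⟨⋃ n, M n, countable_iUnion hMc, ?_⟩⟩
  rw [Metric.dense_iff]
  intro x r hr
  obtain ⟨n, hn⟩ := exists_nat_one_div_lt hr
  have key : ∃ y ∈ M n, dist x y < 1/((n:ℝ)+1) := by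
    by_contra hk
    push_neg at hk
    have hins : ∀ a ∈ insert x (M n), ∀ b ∈ insert x (M n), a ≠ b →
        1/((n:ℝ)+1) ≤ dist a b := by
      rintro a (rfl | haM) b (rfl | hbM) hab
      · exact absurd rfl hab
      · exact hk b hbM
      · rw [dist_comm]; exact hk a haM
      · exact (hM n).1 a haM b hbM hab
    have hsub := (hM n).2 hins (subset_insert _ _)
    have hxM : x ∈ M n := hsub (mem_insert _ _)
    have h0 := hk x hxM
    rw [dist_self] at h0
    have : (0:ℝ) < 1/((n:ℝ)+1) := by positivity
    linarith
  obtain ⟨y, hyM, hxy⟩ := key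
  exact ⟨y, by rw [mem_ball, dist_comm]; exact lt_trans hxy hn, mem_iUnion.mpr ⟨n, hyM⟩⟩

end AuxLemmas

/-- Index predicate for the family of closed sets used in the embedding. -/
def WP {Ω : Ordinal} (σ : ℕ → Set.Iic Ω) : (ℕ ⊕ ℕ × Set.Iio Ω) → Prop
  | Sum.inl _ => True
  | Sum.inr p => (p.2 : Ordinal) < (σ p.1 : Ordinal)


lemma aux_isOpen_iUnion {α : Type*} {κ : Sort*} (t : TopologicalSpace α) (g : κ → Set α)
    (h : ∀ k, @IsOpen _ t (g k)) : @IsOpen _ t (⋃ k, g k) := by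
  letI := t; exact isOpen_iUnion h

lemma aux_isOpen_empty {α : Type*} (t : TopologicalSpace α) : @IsOpen _ t ∅ := by
  letI := t; exact isOpen_empty

lemma aux_isOpen_univ {α : Type*} (t : TopologicalSpace α) : @IsOpen _ t Set.univ := by
  letI := t; exact isOpen_univ

section Main

open Metric Set TopologicalSpace

/-- If `(X,d)` is non-separable and every closed proper ball is totally bounded,
then `(ω₁ + 1)^{ω}` embeds into `(CL X, τ_{w(d)})`. -/
theorem stmt_15 {X : Type*} [MetricSpace X]
    (hsep : ¬ TopologicalSpace.SeparableSpace X)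
    (htb : ∀ (x : X) (r : ℝ), 0 ≤ r → Metric.closedBall x r ≠ Set.univ →
      TotallyBounded (Metric.closedBall x r)) :
    ∃ f : (ℕ → Set.Iic (Cardinal.aleph 1).ord) → CL X,
      @Topology.IsEmbedding _ _ _ (WijsmanTopology X) f := by
  classical
  obtain ⟨ε, hε, S, hSunc, hSsep⟩ := aux_exists_unc_sep hsep
  have hcard : Cardinal.aleph 1 ≤ Cardinal.mk S :=
    le_of_not_gt (fun h => hSunc ((Cardinal.countable_iff_lt_aleph_one S).mpr h))
  obtain ⟨emb⟩ : Nonempty ((ℕ ⊕ ℕ × Set.Iio (Cardinal.aleph 1).ord) ↪ S) := by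
    have haleph0 : Cardinal.aleph0 ≤ Cardinal.mk (Set.Iio (Cardinal.aleph 1).ord) := by
      rw [Ordinal.mk_Iio_ordinal, Cardinal.card_ord]
      exact Cardinal.aleph0_le_lift.mpr (Cardinal.aleph0_le_aleph 1)
    have hmkι : Cardinal.mk (ℕ ⊕ ℕ × Set.Iio (Cardinal.aleph 1).ord) =
        Cardinal.mk (Set.Iio (Cardinal.aleph 1).ord) := by
      simp only [Cardinal.mk_sum, Cardinal.mk_prod, Cardinal.mk_nat, Cardinal.lift_aleph0,
        Cardinal.lift_uzero]
      rw [Cardinal.mul_eq_max le_rfl haleph0, max_eq_right haleph0,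
        Cardinal.add_eq_max le_rfl, max_eq_right haleph0]
    obtain ⟨eqv⟩ := Cardinal.eq.mp hmkι
    suffices h : Nonempty (Set.Iio (Cardinal.aleph 1).ord ↪ S) by
      obtain ⟨g⟩ := h
      exact ⟨(Equiv.toEmbedding eqv).trans g⟩
    rw [← Cardinal.lift_mk_le', Ordinal.mk_Iio_ordinal, Cardinal.card_ord, Cardinal.lift_lift]
    simp only [Cardinal.lift_aleph, Ordinal.lift_one]
    exact Cardinal.aleph_one_le_lift.mpr hcard
  set Ω := (Cardinal.aleph 1).ord with hΩdef
  set pt : (ℕ ⊕ ℕ × Set.Iio Ω) → X := fun i => (emb i : X) with hpt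
  have ptInj : Function.Injective pt := fun i j h => emb.injective (Subtype.ext h)
  have ptSep : ∀ i j : (ℕ ⊕ ℕ × Set.Iio Ω), i ≠ j → ε ≤ dist (pt i) (pt j) :=
    fun i j h => hSsep _ (emb i).2 _ (emb j).2 (fun e => h (emb.injective (Subtype.ext e)))
  set Aset : (ℕ → Set.Iic Ω) → Set X := fun σ => pt '' {i | WP σ i} with hAset
  have memA : ∀ (σ) (i : ℕ ⊕ ℕ × Set.Iio Ω), pt i ∈ Aset σ ↔ WP σ i := by
    intro σ i
    constructor
    · rintro ⟨j, hj, hji⟩; rwa [← ptInj hji]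
    · intro h; exact ⟨i, h, rfl⟩
  have hAsep : ∀ σ, ∀ a ∈ Aset σ, ∀ b ∈ Aset σ, a ≠ b → ε ≤ dist a b := by
    rintro σ _ ⟨i, _, rfl⟩ _ ⟨j, _, rfl⟩ hab
    exact ptSep i j (fun h => hab (by rw [h]))
  have hAne : ∀ σ, (Aset σ).Nonempty := fun σ =>
    ⟨pt (Sum.inl 0), (memA σ (Sum.inl 0)).mpr trivial⟩
  have hAcl : ∀ σ, IsClosed (Aset σ) := fun σ => aux_sep_closed hε (hAsep σ)
  set f : (ℕ → Set.Iic Ω) → CL X := fun σ => ⟨Aset σ, hAne σ, hAcl σ⟩ with hf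
  -- key finiteness lemma: away from the "radius", only finitely many family points
  have hfin : ∀ (z : X) (r : ℝ), (∃ y : X, r < dist z y) →
      {i : ℕ ⊕ ℕ × Set.Iio Ω | dist z (pt i) ≤ r}.Finite := by
    intro z r hr
    rcases lt_or_ge r 0 with h0 | h0
    · have hempty : {i : ℕ ⊕ ℕ × Set.Iio Ω | dist z (pt i) ≤ r} = ∅ := by
        ext i; simp only [mem_setOf_eq, mem_empty_iff_false, iff_false, not_le]
        exact lt_of_lt_of_le h0 dist_nonneg
      rw [hempty]; exact finite_empty
    · have hball : Metric.closedBall z r ≠ Set.univ := by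
        obtain ⟨y, hy⟩ := hr
        intro h
        have : y ∈ Metric.closedBall z r := h ▸ Set.mem_univ y
        rw [Metric.mem_closedBall, dist_comm] at this
        exact absurd hy (not_lt.mpr this)
      obtain ⟨t, htf, hcov⟩ := (Metric.totallyBounded_iff.mp (htb z r h0 hball)) (ε/3)
        (by linarith)
      set u : (ℕ ⊕ ℕ × Set.Iio Ω) → X := fun i =>
        if h : ∃ y ∈ t, pt i ∈ Metric.ball y (ε/3) then h.choose else z with hu
      have hexmem : ∀ i : ℕ ⊕ ℕ × Set.Iio Ω, dist z (pt i) ≤ r →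
          ∃ y ∈ t, pt i ∈ Metric.ball y (ε/3) := by
        intro i hi
        have hmem : pt i ∈ Metric.closedBall z r := by
          rw [Metric.mem_closedBall, dist_comm]; exact hi
        have := hcov hmem; simpa using this
      apply Set.Finite.of_finite_image (f := u) ?_ ?_
      · apply htf.subset
        rintro _ ⟨i, hi, rfl⟩
        have hex := hexmem i hi
        simp only [hu, dif_pos hex]
        exact hex.choose_spec.1
      · intro i hi j hj hij
        by_contra hne
        have hexi := hexmem i hi
        have hexj := hexmem j hj
        have hui : dist (pt i) (u i) < ε/3 := by
          simp only [hu, dif_pos hexi]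
          have := hexi.choose_spec.2; rwa [Metric.mem_ball] at this
        have huj : dist (pt j) (u j) < ε/3 := by
          simp only [hu, dif_pos hexj]
          have := hexj.choose_spec.2; rwa [Metric.mem_ball] at this
        rw [← hij] at huj
        have htri : dist (pt i) (pt j) ≤ dist (pt i) (u i) + dist (u i) (pt j) :=
          dist_triangle _ _ _
        rw [dist_comm (u i) (pt j)] at htri
        linarith [ptSep i j hne]
  -- continuity of the coordinate maps on the domain
  have hcSub : ∀ n : ℕ, Continuous fun τ : ℕ → Set.Iic Ω => ((τ n : Set.Iic Ω) : Ordinal) :=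
    fun n => continuous_subtype_val.comp (continuous_apply n)
  -- continuity of each distance functional
  have hcoord : ∀ z : X, Continuous fun σ : ℕ → Set.Iic Ω => Metric.infDist z (Aset σ) := by
    intro z
    rw [continuous_iff_continuousAt]
    intro σ
    rw [ContinuousAt, Metric.tendsto_nhds]
    intro δ hδ
    have hup : ∀ᶠ τ in nhds σ,
        Metric.infDist z (Aset τ) < Metric.infDist z (Aset σ) + δ/2 := by
      have hlt : Metric.infDist z (Aset σ) < Metric.infDist z (Aset σ) + δ/2 := by linarith
      obtain ⟨a, ha, hda⟩ := (Metric.infDist_lt_iff (hAne σ)).mp hlt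
      obtain ⟨i, hPi, rfl⟩ := ha
      rcases i with m | ⟨n, β⟩
      · exact Filter.Eventually.of_forall (fun τ =>
          lt_of_le_of_lt (Metric.infDist_le_dist_of_mem ((memA τ (Sum.inl m)).mpr trivial)) hda)
      · have hPi' : (β : Ordinal) < ((σ n : Set.Iic Ω) : Ordinal) := hPi
        have hopen : IsOpen {τ : ℕ → Set.Iic Ω | (β : Ordinal) < ((τ n : Set.Iic Ω) : Ordinal)} :=
          isOpen_Ioi.preimage (hcSub n)
        filter_upwards [hopen.mem_nhds hPi'] with τ hτ
        exact lt_of_le_of_lt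
          (Metric.infDist_le_dist_of_mem ((memA τ (Sum.inr (n, β))).mpr hτ)) hda
    have hlow : ∀ᶠ τ in nhds σ,
        Metric.infDist z (Aset σ) - δ < Metric.infDist z (Aset τ) := by
      rcases lt_or_ge (Metric.infDist z (Aset σ)) δ with hcase | hcase
      · refine Filter.Eventually.of_forall (fun τ => lt_of_lt_of_le ?_ Metric.infDist_nonneg)
        linarith
      · have hFfin := hfin z (Metric.infDist z (Aset σ) - δ/2)
          ⟨pt (Sum.inl 0), by
            have h := Metric.infDist_le_dist_of_mem (x := z) ((memA σ (Sum.inl 0)).mpr trivial)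
            linarith⟩
        have hnP : ∀ i ∈ {i : ℕ ⊕ ℕ × Set.Iio Ω |
            dist z (pt i) ≤ Metric.infDist z (Aset σ) - δ/2}, ¬ WP σ i := by
          intro i hi hP
          have h1 : Metric.infDist z (Aset σ) ≤ dist z (pt i) :=
            Metric.infDist_le_dist_of_mem ((memA σ i).mpr hP)
          have h2 : dist z (pt i) ≤ Metric.infDist z (Aset σ) - δ/2 := hi
          linarith
        set Vi : (ℕ ⊕ ℕ × Set.Iio Ω) → Set (ℕ → Set.Iic Ω) := fun i =>
          match i with
          | Sum.inl _ => Set.univ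
          | Sum.inr p => {τ | ((τ p.1 : Set.Iic Ω) : Ordinal) < Order.succ (p.2 : Ordinal)}
          with hVi
        have hViopen : ∀ i, IsOpen (Vi i) := by
          rintro (m | ⟨n, β⟩)
          · exact isOpen_univ
          · exact isOpen_Iio.preimage (hcSub n)
        have hσVi : ∀ i ∈ {i : ℕ ⊕ ℕ × Set.Iio Ω |
            dist z (pt i) ≤ Metric.infDist z (Aset σ) - δ/2}, σ ∈ Vi i := by
          rintro (m | ⟨n, β⟩) hi
          · trivial
          · have h2 : ¬ ((β : Ordinal) < ((σ n : Set.Iic Ω) : Ordinal)) := hnP _ hi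
            exact Order.lt_succ_iff.mpr (not_lt.mp h2)
        have hV : (⋂ i ∈ {i : ℕ ⊕ ℕ × Set.Iio Ω |
            dist z (pt i) ≤ Metric.infDist z (Aset σ) - δ/2}, Vi i) ∈ nhds σ :=
          (hFfin.isOpen_biInter (fun i _ => hViopen i)).mem_nhds
            (Set.mem_iInter₂.mpr hσVi)
        filter_upwards [hV] with τ hτ
        by_contra hcon
        push_neg at hcon
        have hlt2 : Metric.infDist z (Aset τ) < Metric.infDist z (Aset σ) - δ/2 :=
          lt_of_le_of_lt hcon (by linarith)
        obtain ⟨a, ha, hda⟩ := (Metric.infDist_lt_iff (hAne τ)).mp hlt2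
        obtain ⟨j, hPj, rfl⟩ := ha
        have hjF : dist z (pt j) ≤ Metric.infDist z (Aset σ) - δ/2 := le_of_lt hda
        rcases j with m | ⟨n, β⟩
        · exact hnP _ hjF trivial
        · have h1 : (β : Ordinal) < ((τ n : Set.Iic Ω) : Ordinal) := hPj
          have h2 : τ ∈ Vi (Sum.inr (n, β)) := Set.mem_iInter₂.mp hτ _ hjF
          have h3 : ((τ n : Set.Iic Ω) : Ordinal) < Order.succ (β : Ordinal) := h2
          exact absurd h1 (not_lt.mpr (Order.lt_succ_iff.mp h3))
    filter_upwards [hup, hlow] with τ h1 h2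
    rw [Real.dist_eq, abs_sub_lt_iff]
    constructor <;> linarith
  -- continuity of f
  have hcont : @Continuous _ _ _ (WijsmanTopology X) f := by
    show @Continuous _ _ _
      (⨅ x : X, TopologicalSpace.induced (fun A : CL X => Metric.infDist x A.1) inferInstance) f
    rw [continuous_iInf_rng]
    intro z
    rw [continuous_induced_rng]
    exact hcoord z
  -- injectivity of f
  have hinj : Function.Injective f := by
    have key : ∀ σ τ : ℕ → Set.Iic Ω, ∀ n, Aset σ = Aset τ →
        ((σ n : Set.Iic Ω) : Ordinal) < ((τ n : Set.Iic Ω) : Ordinal) → False := by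
      intro σ τ n hA hlt
      have hΩ : ((σ n : Set.Iic Ω) : Ordinal) < Ω := lt_of_lt_of_le hlt (τ n).2
      have h1 : pt (Sum.inr (n, ⟨_, hΩ⟩)) ∈ Aset τ := (memA τ _).mpr hlt
      rw [← hA] at h1
      have h2 := (memA σ (Sum.inr (n, ⟨_, hΩ⟩))).mp h1
      exact lt_irrefl _ h2
    intro σ τ h
    have hA : Aset σ = Aset τ := congrArg (fun A : CL X => A.1) h
    funext n
    rcases lt_trichotomy ((σ n : Set.Iic Ω) : Ordinal) ((τ n : Set.Iic Ω) : Ordinal)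
      with h1 | h1 | h1
    · exact absurd h1 (fun h1 => key σ τ n hA h1)
    · exact Subtype.ext h1
    · exact absurd h1 (fun h1 => key τ σ n hA.symm h1)
  -- detection of membership via the distance functionals
  have hdetect : ∀ (σ) (i : ℕ ⊕ ℕ × Set.Iio Ω),
      Metric.infDist (pt i) (Aset σ) < ε/2 ↔ WP σ i := by
    intro σ i
    constructor
    · intro h
      obtain ⟨a, ha, hda⟩ := (Metric.infDist_lt_iff (hAne σ)).mp h
      obtain ⟨j, hPj, rfl⟩ := ha
      rcases eq_or_ne i j with rfl | hne
      · exact hPj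
      · have := ptSep i j hne
        linarith
    · intro h
      have h0 : Metric.infDist (pt i) (Aset σ) = 0 :=
        Metric.infDist_zero_of_mem ((memA σ i).mpr h)
      rw [h0]; linarith
  have hdetect2 : ∀ (σ) (i : ℕ ⊕ ℕ × Set.Iio Ω),
      ¬ WP σ i → ε ≤ Metric.infDist (pt i) (Aset σ) := by
    intro σ i h
    by_contra hlt
    push_neg at hlt
    obtain ⟨a, ha, hda⟩ := (Metric.infDist_lt_iff (hAne σ)).mp hlt
    obtain ⟨j, hPj, rfl⟩ := ha
    rcases eq_or_ne i j with rfl | hne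
    · exact h hPj
    · linarith [ptSep i j hne]
  have hopenU : ∀ (z : X) (U : Set ℝ), IsOpen U →
      @IsOpen _ (TopologicalSpace.induced f (WijsmanTopology X))
        (f ⁻¹' ((fun A : CL X => Metric.infDist z A.1) ⁻¹' U)) := by
    intro z U hU
    have h1 : WijsmanTopology X ≤ TopologicalSpace.induced
        (fun A : CL X => Metric.infDist z A.1) inferInstance :=
      iInf_le (fun x : X => TopologicalSpace.induced
        (fun A : CL X => Metric.infDist x A.1) inferInstance) z
    exact ⟨_, (TopologicalSpace.le_def.mp h1) _ ⟨U, hU, rfl⟩, rfl⟩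
  -- assemble the embedding
  refine ⟨f, @Topology.IsEmbedding.mk _ _ _ (WijsmanTopology X) f
    (@Topology.IsInducing.mk _ _ _ (WijsmanTopology X) f ?_) hinj⟩
  apply le_antisymm
  · exact continuous_iff_le_induced.mp hcont
  · show TopologicalSpace.induced f (WijsmanTopology X) ≤
      ⨅ n : ℕ, TopologicalSpace.induced (fun σ : ℕ → Set.Iic Ω => σ n)
        (TopologicalSpace.induced (Subtype.val) inferInstance)
    refine le_iInf fun n => ?_
    rw [induced_compose]
    rw [show (inferInstance : TopologicalSpace Ordinal) =
        TopologicalSpace.generateFrom {s : Set Ordinal | ∃ a, s = Set.Ioi a ∨ s = Set.Iio a}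
      from OrderTopology.topology_eq_generate_intervals]
    refine @le_induced_generateFrom _ _ (TopologicalSpace.induced f (WijsmanTopology X)) _ _ ?_
    rintro s ⟨a, rfl | rfl⟩
    · -- preimage of Ioi a
      by_cases ha : a < Ω
      · have hset : ((Subtype.val ∘ fun σ : ℕ → Set.Iic Ω => σ n) ⁻¹' Set.Ioi a) =
            f ⁻¹' ((fun A : CL X => Metric.infDist (pt (Sum.inr (n, ⟨a, ha⟩))) A.1) ⁻¹'
              Set.Iio (ε/2)) := by
          ext τ
          simp only [Set.mem_preimage, Function.comp_apply, Set.mem_Ioi, Set.mem_Iio]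
          exact (hdetect τ (Sum.inr (n, ⟨a, ha⟩))).symm
        rw [hset]
        exact hopenU _ _ isOpen_Iio
      · have hset : ((Subtype.val ∘ fun σ : ℕ → Set.Iic Ω => σ n) ⁻¹' Set.Ioi a) = ∅ := by
          ext τ
          simp only [Set.mem_preimage, Function.comp_apply, Set.mem_Ioi,
            Set.mem_empty_iff_false, iff_false, not_lt]
          exact le_trans (τ n).2 (not_lt.mp ha)
        rw [hset]
        exact aux_isOpen_empty _
    · -- preimage of Iio a
      by_cases ha : Ω < a
      · have hset : ((Subtype.val ∘ fun σ : ℕ → Set.Iic Ω => σ n) ⁻¹' Set.Iio a) =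
            Set.univ := by
          ext τ
          simp only [Set.mem_preimage, Function.comp_apply, Set.mem_Iio, Set.mem_univ, iff_true]
          exact lt_of_le_of_lt (τ n).2 ha
        rw [hset]
        exact aux_isOpen_univ _
      · have haΩ : a ≤ Ω := not_lt.mp ha
        have hset : ((Subtype.val ∘ fun σ : ℕ → Set.Iic Ω => σ n) ⁻¹' Set.Iio a) =
            ⋃ σ : {σ : ℕ → Set.Iic Ω // ((σ n : Set.Iic Ω) : Ordinal) < a},
              f ⁻¹' ((fun A : CL X =>
                Metric.infDist (pt (Sum.inr (n, ⟨((σ.1 n : Set.Iic Ω) : Ordinal),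
                  lt_of_lt_of_le σ.2 haΩ⟩))) A.1) ⁻¹' Set.Ioi (ε/2)) := by
          ext τ
          simp only [Set.mem_preimage, Function.comp_apply, Set.mem_Iio, Set.mem_iUnion,
            Set.mem_Ioi]
          constructor
          · intro hτ
            refine ⟨⟨τ, hτ⟩, ?_⟩
            have hnP : ¬ WP τ (Sum.inr (n, ⟨((τ n : Set.Iic Ω) : Ordinal),
                lt_of_lt_of_le hτ haΩ⟩)) := by
              intro hP
              exact lt_irrefl _ (hP : ((τ n : Set.Iic Ω) : Ordinal) < _)
            have := hdetect2 τ _ hnP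
            linarith
          · rintro ⟨σ', hσ'⟩
            have hnP : ¬ WP τ (Sum.inr (n, ⟨((σ'.1 n : Set.Iic Ω) : Ordinal),
                lt_of_lt_of_le σ'.2 haΩ⟩)) := by
              intro hP
              have h0 : Metric.infDist (pt (Sum.inr (n, ⟨((σ'.1 n : Set.Iic Ω) : Ordinal),
                  lt_of_lt_of_le σ'.2 haΩ⟩))) (Aset τ) = 0 :=
                Metric.infDist_zero_of_mem ((memA τ _).mpr hP)
              rw [h0] at hσ'
              linarith
            have hle : ((τ n : Set.Iic Ω) : Ordinal) ≤ ((σ'.1 n : Set.Iic Ω) : Ordinal) :=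
              not_lt.mp hnP
            exact lt_of_le_of_lt hle σ'.2
        rw [hset]
        refine aux_isOpen_iUnion _ _ ?_
        intro σ'
        exact hopenU _ _ isOpen_Ioi

end Main
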